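/- Let β ∈ (0,1), v₀ > 0, and let g₁,...,g_k be real numbers. Define recursively v_t = β·v_{t-1} + (1-β)·g_t². Then (1-β)·∑_{t=1}^k g_t²/v_t ≤ ln(v_k/(β^k·v₀)). -/
import Mathlib


theorem rmsprop_log_potential (β v₀ : ℝ) (hβ : β ∈ Set.Ioo (0:ℝ) 1) (hv0 : v₀ > 0)
    (g v : ℕ → ℝ) (hv₀ : v 0 = v₀)
    (hrec : ∀ t : ℕ, 1 ≤ t → v t = β * v (t - 1) + (1 - β) * (g t) ^ 2)
    (k : ℕ) :
    (1 - β) * ∑ t ∈ Finset.Icc 1 k, (g t) ^ 2 / v t ≤ Real.log (v k / (β ^ k * v₀)) := by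
  obtain ⟨hβ0, hβ1⟩ := hβ
  have hβ' : 0 < 1 - β := by linarith
  have vpos : ∀ t, 0 < v t := by
    intro t
    induction t with
    | zero => rw [hv₀]; exact hv0
    | succ n ih =>
      rw [hrec (n+1) (by omega)]
      simp only [Nat.add_sub_cancel]
      have : 0 ≤ (1 - β) * g (n+1) ^ 2 := by positivity
      nlinarith
  induction k with
  | zero => simp [hv₀, div_self (ne_of_gt hv0)]
  | succ n ih =>
    rw [Finset.sum_Icc_succ_top (by omega)]
    have hvn := vpos n
    have hvn1 := vpos (n+1)
    have hrecn := hrec (n+1) (by omega)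
    simp only [Nat.add_sub_cancel] at hrecn
    -- key step: (1-β) * g(n+1)^2 / v(n+1) ≤ log (v(n+1)) - log (β * v n)
    have key : (1 - β) * (g (n+1) ^ 2 / v (n+1)) ≤
        Real.log (v (n+1)) - Real.log (β * v n) := by
      have hx : 0 < β * v n / v (n+1) := by positivity
      have hlog : Real.log (β * v n / v (n+1)) ≤ β * v n / v (n+1) - 1 :=
        Real.log_le_sub_one_of_pos hx
      rw [Real.log_div (by positivity) (ne_of_gt hvn1)] at hlog
      have : β * v n / v (n+1) - 1 = -((1 - β) * (g (n+1) ^ 2 / v (n+1))) := by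
        field_simp
        nlinarith
      linarith [hlog, this ▸ hlog]
    have rhs_eq : Real.log (v (n+1) / (β ^ (n+1) * v₀)) =
        Real.log (v n / (β ^ n * v₀)) + (Real.log (v (n+1)) - Real.log (β * v n)) := by
      rw [Real.log_div (ne_of_gt hvn1) (by positivity),
          Real.log_div (ne_of_gt hvn) (by positivity),
          Real.log_mul (by positivity) (ne_of_gt hvn),
          Real.log_mul (by positivity) (ne_of_gt hv0),
          Real.log_mul (by positivity) (ne_of_gt hv0),
          pow_succ, Real.log_mul (by positivity) hβ0.ne']
      ring
    rw [mul_add, rhs_eq]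
    exact add_le_add ih key
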